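/- Let R₀, R₁ ∈ ℂ^{n×n} be Hermitian positive semi-definite and J ∈ ℂ^{n×n} skew-Hermitian, and let a > 0. Assume ker R₀ ∩ ker R₁ ∩ ker J = {0}. Then the linear pencil P(λ) = λ(R₁ + J) + (R₀ + aJ) has all its eigenvalues in the closed left half-plane {z : Re z ≤ 0}. -/

import Mathlib

open scoped ComplexOrder in
theorem stmt19 {n : ℕ} (R₀ R₁ J : Matrix (Fin n) (Fin n) ℂ)
    (hR₀ : R₀.PosSemidef) (hR₁ : R₁.PosSemidef)
    (hJ : J.conjTranspose = -J) (a : ℝ) (ha : 0 < a)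
    (hker : ∀ x : Fin n → ℂ, R₀.mulVec x = 0 → R₁.mulVec x = 0 → J.mulVec x = 0 → x = 0) :
    ∀ μ : ℂ, (μ • (R₁ + J) + (R₀ + (a : ℂ) • J)).det = 0 → μ.re ≤ 0 := by
  intro μ hdet
  by_contra hμ
  push_neg at hμ
  obtain ⟨x, hx0, hx⟩ := (Matrix.exists_mulVec_eq_zero_iff).mpr hdet
  set c₀ : ℂ := dotProduct (star x) (R₀.mulVec x) with hc₀
  set c₁ : ℂ := dotProduct (star x) (R₁.mulVec x) with hc₁
  set cJ : ℂ := dotProduct (star x) (J.mulVec x) with hcJ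
  -- the scalar equation
  have heq : μ * c₁ + μ * cJ + (c₀ + (a : ℂ) * cJ) = 0 := by
    have := congrArg (fun v => dotProduct (star x) v) hx
    simpa [Matrix.add_mulVec, Matrix.smul_mulVec, dotProduct_add,
      dotProduct_smul, smul_eq_mul, mul_add, hc₀, hc₁, hcJ] using this
  have h0 : 0 ≤ c₀ := hR₀.dotProduct_mulVec_nonneg x
  have h1 : 0 ≤ c₁ := hR₁.dotProduct_mulVec_nonneg x
  have h0' := Complex.nonneg_iff.mp h0
  have h1' := Complex.nonneg_iff.mp h1
  -- cJ is purely imaginary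
  have hcJre : cJ.re = 0 := by
    have hstar : star cJ = -cJ := by
      rw [hcJ, ← Matrix.star_dotProduct_star, star_star, Matrix.star_mulVec, hJ,
        Matrix.dotProduct_mulVec]
      simp [Matrix.vecMul_neg, neg_dotProduct, Matrix.dotProduct_mulVec]
    have := congrArg Complex.re hstar
    simp [Complex.conj_re] at this
    linarith
  set p := μ.re
  set q := μ.im
  set r₀ := c₀.re
  set r₁ := c₁.re
  set t := cJ.im
  have hre : p * r₁ + r₀ - q * t = 0 := by
    have := congrArg Complex.re heq
    simp [Complex.add_re, Complex.mul_re, h0'.2.symm, h1'.2.symm, hcJre] at this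
    linarith
  have him : q * r₁ + (p + a) * t = 0 := by
    have := congrArg Complex.im heq
    simp [Complex.add_im, Complex.mul_im, h0'.2.symm, h1'.2.symm, hcJre] at this
    linarith
  have key : (p + a) * p * r₁ + (p + a) * r₀ + q ^ 2 * r₁ = 0 := by
    linear_combination (p + a) * hre + q * him
  have hr₁0 : 0 ≤ r₁ := h1'.1
  have hr₀0 : 0 ≤ r₀ := h0'.1
  have hpa : 0 < p + a := by linarith
  have hr₁ : r₁ = 0 := by nlinarith [sq_nonneg q, mul_pos hpa hμ]
  have hr₀ : r₀ = 0 := by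
    have h' : (p + a) * r₀ = 0 := by
      linear_combination key + (-(p + a) * p - q ^ 2) * hr₁
    exact (mul_eq_zero.mp h').resolve_left hpa.ne'
  have ht : t = 0 := by
    have h' : (p + a) * t = 0 := by linear_combination him - q * hr₁
    exact (mul_eq_zero.mp h').resolve_left hpa.ne'
  -- hence c₁ = 0, c₀ = 0
  have hc1z : c₁ = 0 := Complex.ext (by simpa using hr₁) (by simpa using h1'.2.symm)
  have hc0z : c₀ = 0 := Complex.ext (by simpa using hr₀) (by simpa using h0'.2.symm)
  have hR₁x : R₁.mulVec x = 0 := (hR₁.dotProduct_mulVec_zero_iff x).mp hc1z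
  have hR₀x : R₀.mulVec x = 0 := (hR₀.dotProduct_mulVec_zero_iff x).mp hc0z
  -- now the pencil equation becomes (μ + a) • J x = 0
  have hJx : J.mulVec x = 0 := by
    have hx' : (μ + (a : ℂ)) • J.mulVec x = 0 := by
      have := hx
      rw [Matrix.add_mulVec, Matrix.add_mulVec, Matrix.smul_mulVec,
        Matrix.smul_mulVec, Matrix.add_mulVec, hR₁x, hR₀x] at this
      rw [add_smul]
      simpa using this
    have hne : (μ + (a : ℂ)) ≠ 0 := by
      intro h
      have := congrArg Complex.re h
      simp at this
      linarith
    exact (smul_eq_zero.mp hx').resolve_left hne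
  exact hx0 (hker x hR₀x hR₁x hJx)
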